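/- (Identifiability for high-dimensional instrument, sparse β*.) Under Assumption 1 and assuming that Q := lim_{m→∞} m·Cov(Ĩ,X̃)ᵀ Cov(Ĩ,X̃) ∈ ℝ^{d×d} and Q_Y = Qβ* exist, fixing s* ≤ d, the following are equivalent: (i) for every β* ∈ ℝ^d with ‖β*‖₀ ≤ s*, the set of sparsest solutions S_{0,∞} := argmin_{β∈S_∞} ‖β‖₀ equals the singleton {β*}; (ii) ker(Q) ∩ Σ_{2s*} = {0}. -/

import Mathlib

open MeasureTheory ProbabilityTheory Filter Matrix
open scoped Topology NNReal ENNReal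

noncomputable section

/-- Cross-covariance matrix of two centered random vectors (equal to `E[U Vᵀ]`
for centered `U, V`). -/
def covMat {Ω : Type*} [MeasurableSpace Ω] (μ : Measure Ω) {ι κ : Type*}
    [Fintype ι] [Fintype κ] (U : Ω → ι → ℝ) (V : Ω → κ → ℝ) : Matrix ι κ ℝ :=
  Matrix.of fun i j => ∫ ω, U ω i * V ω j ∂μ

/-- Cross-covariance vector of a centered random vector and a centered
random variable. -/
def covVec {Ω : Type*} [MeasurableSpace Ω] (μ : Measure Ω) {ι : Type*}
    [Fintype ι] (U : Ω → ι → ℝ) (Y : Ω → ℝ) : ι → ℝ :=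
  fun i => ∫ ω, U ω i * Y ω ∂μ

/-- Variance (covariance) matrix of a random vector. -/
def varMat {Ω : Type*} [MeasurableSpace Ω] (μ : Measure Ω) {ι : Type*} [Fintype ι]
    (Z : Ω → ι → ℝ) : Matrix ι ι ℝ :=
  Matrix.of fun i j =>
    ∫ ω, Z ω i * Z ω j ∂μ - (∫ ω, Z ω i ∂μ) * (∫ ω, Z ω j ∂μ)

/-- Euclidean (ℓ2) norm of a finite-dimensional real vector. -/
def norm2 {ι : Type*} [Fintype ι] (v : ι → ℝ) : ℝ := Real.sqrt (∑ i, v i ^ 2)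

/-- ℓ0 "norm": number of nonzero entries. -/
def sparsity {ι : Type*} [Fintype ι] (v : ι → ℝ) : ℕ :=
  (Finset.univ.filter fun i => v i ≠ 0).card

/-- ℓ2 → ℓ2 operator norm of a real matrix. -/
def opNorm {ι κ : Type*} [Fintype ι] [Fintype κ] (A : Matrix ι κ ℝ) : ℝ :=
  sSup {y : ℝ | ∃ x : κ → ℝ, norm2 x ≤ 1 ∧ y = norm2 (A *ᵥ x)}

/-- Identifiability for high-dimensional instrument and sparse `β*`:
under Assumption 1 and existence of `Q = lim_m m Cov(Ĩ,X̃)ᵀCov(Ĩ,X̃)` (with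
`Q_Y = Qβ*`), fixing `s* ≤ d`, identifiability of every `s*`-sparse `β*` via the
sparsest solution of `Qβ = Qβ*` is equivalent to `ker(Q) ∩ Σ_{2s*} = {0}`. -/

lemma sparsity_sub_le' {ι : Type*} [Fintype ι] (v w : ι → ℝ) :
    sparsity (fun i => v i - w i) ≤ sparsity v + sparsity w := by
  classical
  unfold sparsity
  refine le_trans (Finset.card_le_card ?_) (Finset.card_union_le _ _)
  intro i hi
  simp only [Finset.mem_filter, Finset.mem_union, Finset.mem_univ, true_and] at *
  by_contra h
  push_neg at h
  simp [h.1, h.2] at hi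

theorem stmt_4
    (d sstar : ℕ) (hs : sstar ≤ d) (βstar : Fin d → ℝ)
    (Ω : ℕ → Type) [mΩ : ∀ m, MeasurableSpace (Ω m)]
    (μ : ∀ m, Measure (Ω m)) (hprob : ∀ m, IsProbabilityMeasure (μ m))
    (I : ∀ m, Ω m → Fin m → ℝ) (X : ∀ m, Ω m → Fin d → ℝ)
    (Y : ∀ m, Ω m → ℝ) (ε : ∀ m, Ω m → ℝ)
    (It : ∀ m, Ω m → Fin m → ℝ) (Xt : ∀ m, Ω m → Fin d → ℝ)
    -- measurability and finite second moments
    (hImeas : ∀ m, Measurable (I m))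
    (hI2 : ∀ m i, MemLp (fun ω => I m ω i) 2 (μ m))
    (hX2 : ∀ m j, MemLp (fun ω => X m ω j) 2 (μ m))
    (hIt2 : ∀ m i, MemLp (fun ω => It m ω i) 2 (μ m))
    (hXt2 : ∀ m j, MemLp (fun ω => Xt m ω j) 2 (μ m))
    (hY2 : ∀ m, MemLp (Y m) 2 (μ m))
    (hε2 : ∀ m, MemLp (ε m) 2 (μ m))
    -- all variables are centered
    (hIc : ∀ m i, ∫ ω, I m ω i ∂(μ m) = 0)
    (hXc : ∀ m j, ∫ ω, X m ω j ∂(μ m) = 0)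
    (hItc : ∀ m i, ∫ ω, It m ω i ∂(μ m) = 0)
    (hXtc : ∀ m j, ∫ ω, Xt m ω j ∂(μ m) = 0)
    (hYc : ∀ m, ∫ ω, Y m ω ∂(μ m) = 0)
    -- structural model Y = Xᵀβ* + ε
    (hmodel : ∀ m ω, Y m ω = (∑ j, X m ω j * βstar j) + ε m ω)
    -- Assumption 1 (i): Cov(Ĩ,X̃) = Cov(I,X)
    (hcov : ∀ m, covMat (μ m) (It m) (Xt m) = covMat (μ m) (I m) (X m))
    -- Assumption 1 (ii): E[ε | I] = 0
    (hexo : ∀ m, (μ m)[ε m | MeasurableSpace.comap (I m) inferInstance] =ᵐ[μ m] 0)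
    -- the limit Q is assumed to exist
    (Q : Matrix (Fin d) (Fin d) ℝ)
    (hQ : Tendsto
      (fun (m : ℕ) => (m : ℝ) • ((covMat (μ m) (It m) (Xt m))ᵀ * covMat (μ m) (It m) (Xt m)))
      atTop (𝓝 Q)) :
    -- (i): identifiability via the sparsest solution, for every s*-sparse target
    (∀ b : Fin d → ℝ, sparsity b ≤ sstar →
        {β : Fin d → ℝ |
            Q *ᵥ β = Q *ᵥ b ∧
            ∀ γ : Fin d → ℝ, Q *ᵥ γ = Q *ᵥ b → sparsity β ≤ sparsity γ}
          = {b})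
    -- (ii): restricted nullspace condition
    ↔ (∀ v : Fin d → ℝ, Q *ᵥ v = 0 → sparsity v ≤ 2 * sstar → v = 0) := by

  constructor
  · -- (i) → (ii)
    intro hident v hQv hsv
    set S := Finset.univ.filter (fun i => v i ≠ 0) with hSdef
    have hScard : S.card ≤ 2 * sstar := hsv
    obtain ⟨T, hTS, hTcard⟩ := Finset.exists_subset_card_eq (s := S) (n := min sstar S.card)
      (min_le_right _ _)
    have hT1 : T.card ≤ sstar := by rw [hTcard]; exact min_le_left _ _
    have hT2 : (S \ T).card ≤ sstar := by
      rw [Finset.card_sdiff_of_subset hTS, hTcard]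
      omega
    set β₁ : Fin d → ℝ := fun i => if i ∈ T then v i else 0 with hβ₁def
    set β₂ : Fin d → ℝ := fun i => if i ∈ T then 0 else -(v i) with hβ₂def
    have hsub : (fun i => β₁ i - β₂ i) = v := by
      funext i
      by_cases hi : i ∈ T <;> simp [hβ₁def, hβ₂def, hi]
    have hsp1 : sparsity β₁ ≤ sstar := by
      refine le_trans (Finset.card_le_card ?_) hT1
      intro i hi
      simp only [Finset.mem_filter, Finset.mem_univ, true_and, hβ₁def] at hi
      by_contra h
      simp [h] at hi
    have hsp2 : sparsity β₂ ≤ sstar := by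
      refine le_trans (Finset.card_le_card ?_) hT2
      intro i hi
      simp only [Finset.mem_filter, Finset.mem_univ, true_and, hβ₂def] at hi
      by_cases h : i ∈ T
      · simp [h] at hi
      · have hvi : v i ≠ 0 := by
          intro hv; simp [h, hv] at hi
        simp [Finset.mem_sdiff, h, hSdef, hvi]
    have hQeq : Q *ᵥ β₁ = Q *ᵥ β₂ := by
      have : Q *ᵥ (β₁ - β₂) = 0 := by
        have : β₁ - β₂ = v := hsub
        rw [this, hQv]
      rw [Matrix.mulVec_sub] at this
      exact sub_eq_zero.mp this
    have h1 := hident β₁ hsp1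
    have h2 := hident β₂ hsp2
    have hsets : ({β₁} : Set (Fin d → ℝ)) = {β₂} := by
      rw [← h1, ← h2, hQeq]
    have hβeq : β₁ = β₂ := by
      have := hsets ▸ (Set.mem_singleton β₁)
      exact this
    funext i
    have := congrFun hsub i
    have h0 := congrFun hβeq i
    beta_reduce at this h0
    simp only [Pi.zero_apply]
    linarith
  · -- (ii) → (i)
    intro hker b hb
    ext β
    simp only [Set.mem_setOf_eq, Set.mem_singleton_iff]
    constructor
    · rintro ⟨hQβ, hmin⟩
      have hβs : sparsity β ≤ sstar := le_trans (hmin b rfl) hb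
      have hz : (fun i => β i - b i) = 0 := by
        refine hker _ ?_ ?_
        · have : (fun i => β i - b i) = β - b := rfl
          rw [this, Matrix.mulVec_sub, hQβ, sub_self]
        · exact le_trans (sparsity_sub_le' β b) (by omega)
      funext i
      have := congrFun hz i
      simp only [Pi.zero_apply] at this
      linarith
    · rintro rfl
      refine ⟨rfl, fun γ hγ => ?_⟩
      by_cases hγs : sparsity γ ≤ sstar
      · have hz : (fun i => β i - γ i) = 0 := by
          refine hker _ ?_ ?_
          · have : (fun i => β i - γ i) = β - γ := rfl
            rw [this, Matrix.mulVec_sub, hγ, sub_self]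
          · exact le_trans (sparsity_sub_le' β γ) (by omega)
        have : β = γ := by
          funext i
          have := congrFun hz i
          simp only [Pi.zero_apply] at this
          linarith
        rw [this]
      · omega
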